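/- Let (S,+) be a commutative semigroup, let F be a finite nonempty subset of S, and let M be a piecewise syndetic subset of S. Then the set {(a,n) ∈ S × ℕ : a + n·F ⊆ M} is piecewise syndetic in the commutative semigroup S × ℕ with coordinatewise addition. -/
import Mathlib

/-- `A` is thick in an additive commutative semigroup. -/
def Thick {T : Type*} [AddCommSemigroup T] (A : Set T) : Prop :=
  ∀ E : Finset T, E.Nonempty → ∃ z : T, ∀ e ∈ E, e + z ∈ A

/-- `A` is piecewise syndetic. -/
def PiecewiseSyndetic {T : Type*} [AddCommSemigroup T] (A : Set T) : Prop :=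
  ∃ G : Finset T, G.Nonempty ∧ Thick {s : T | ∃ g ∈ G, g + s ∈ A}

/-- `pnsmul n x` is the sum of `x` with itself `n` times, for a positive integer `n`. -/
def pnsmul {S : Type*} [AddSemigroup S] (n : ℕ+) (x : S) : S :=
  Nat.rec (motive := fun _ => S) x (fun _ y => y + x) n.natPred

open Filter Set

attribute [local instance] Ultrafilter.add Ultrafilter.addSemigroup

section Abstract

variable {Y : Type*} [AddSemigroup Y] [TopologicalSpace Y] [CompactSpace Y] [T2Space Y]

/-- closed left ideal relative to a subsemigroup `E` -/
def IsCLI (E L : Set Y) : Prop :=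
  L.Nonempty ∧ IsClosed L ∧ L ⊆ E ∧ ∀ u ∈ E, ∀ x ∈ L, u + x ∈ L

theorem exists_min_cli (E L₀ : Set Y) (h : IsCLI E L₀) :
    ∃ L, L ⊆ L₀ ∧ IsCLI E L ∧ ∀ L', IsCLI E L' → L' ⊆ L → L' = L := by
  have hchaincond : ∀ c ⊆ {L | IsCLI E L ∧ L ⊆ L₀}, IsChain (· ⊆ ·) c → c.Nonempty →
      ∃ lb ∈ {L | IsCLI E L ∧ L ⊆ L₀}, ∀ s ∈ c, lb ⊆ s := by
    intro c hcS hchain hcne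
    haveI : Nonempty c := hcne.to_subtype
    obtain ⟨t, ht⟩ := hcne
    have hclosed : ∀ U ∈ c, IsClosed U := fun U hU => (hcS hU).1.2.1
    refine ⟨⋂₀ c, ⟨⟨?_, isClosed_sInter hclosed, ?_, ?_⟩, ?_⟩,
      fun s hs => sInter_subset_of_mem hs⟩
    · refine IsCompact.nonempty_sInter_of_directed_nonempty_isCompact_isClosed
        ?_ (fun U hU => (hcS hU).1.1) (fun U hU => (hclosed U hU).isCompact) hclosed
      intro x hx y hy
      rcases hchain.total hx hy with hxy | hyx
      · exact ⟨x, hx, subset_rfl, hxy⟩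
      · exact ⟨y, hy, hyx, subset_rfl⟩
    · exact (sInter_subset_of_mem ht).trans (hcS ht).1.2.2.1
    · intro u hu x hx
      exact mem_sInter.2 fun U hU => (hcS hU).1.2.2.2 u hu x (mem_sInter.1 hx U hU)
    · exact (sInter_subset_of_mem ht).trans (hcS ht).2
  obtain ⟨m, hmL₀, hmS, hmin⟩ :=
    zorn_superset_nonempty {L | IsCLI E L ∧ L ⊆ L₀} hchaincond L₀ ⟨h, subset_rfl⟩
  exact ⟨m, hmL₀, hmS.1, fun L' hL' hsub =>
    subset_antisymm hsub (hmin ⟨hL', hsub.trans hmS.2⟩ hsub)⟩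

variable (hc : ∀ r : Y, Continuous (· + r))

include hc

theorem isCLI_range_add [Nonempty Y] (q : Y) : IsCLI univ (Set.range (· + q)) := by
  refine ⟨⟨Classical.arbitrary Y + q, mem_range_self _⟩,
    (isCompact_range (hc q)).isClosed, subset_univ _, ?_⟩
  rintro u - x ⟨v, rfl⟩
  exact ⟨u + v, add_assoc u v q⟩

theorem min_strong (L : Set Y) (hL : IsCLI univ L)
    (hmin : ∀ L', IsCLI univ L' → L' ⊆ L → L' = L) {q : Y} (hq : q ∈ L) (r : Y) :
    ∃ u : Y, u + (r + q) = q := by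
  haveI : Nonempty Y := ⟨q⟩
  have hrq : r + q ∈ L := hL.2.2.2 r trivial q hq
  have hsub : Set.range (· + (r + q)) ⊆ L := by
    rintro _ ⟨u, rfl⟩; exact hL.2.2.2 u trivial _ hrq
  have heq := hmin _ (isCLI_range_add hc (r + q)) hsub
  rw [← heq] at hq
  exact hq

theorem min_right_id (L : Set Y) (hL : IsCLI univ L)
    (hmin : ∀ L', IsCLI univ L' → L' ⊆ L → L' = L) {p : Y} (hp : p ∈ L) (hidem : p + p = p)
    {q : Y} (hq : q ∈ L) : q + p = q := by
  have hcli : IsCLI univ (L ∩ {u | u + p = u}) := by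
    refine ⟨⟨p, hp, hidem⟩, hL.2.1.inter (isClosed_eq (hc p) continuous_id),
      subset_univ _, ?_⟩
    rintro u - x ⟨hxL, hxp⟩
    simp only [mem_setOf_eq] at hxp
    refine ⟨hL.2.2.2 u trivial x hxL, ?_⟩
    simp only [mem_setOf_eq]
    rw [add_assoc, hxp]
  have heq := hmin _ hcli inter_subset_left
  rw [← heq] at hq
  exact hq.2

theorem cli_idem {E L : Set Y} (hL : IsCLI E L) : ∃ p ∈ L, p + p = p :=
  exists_idempotent_in_compact_add_subsemigroup hc L hL.1 hL.2.1.isCompact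
    (fun x hx y hy => hL.2.2.2 x (hL.2.2.1 hx) y hy)

theorem F3 {E : Set Y} (hEcl : IsClosed E) (hEadd : ∀ x ∈ E, ∀ y ∈ E, x + y ∈ E)
    {p : Y} (hpE : p ∈ E) (hidem : p + p = p)
    {L₀ : Set Y} (hL₀ : IsCLI univ L₀)
    (hmin₀ : ∀ L', IsCLI univ L' → L' ⊆ L₀ → L' = L₀) (hpL : p ∈ L₀)
    {r : Y} (hrE : r ∈ E) : ∃ v ∈ E, v + (r + p) = p := by
  haveI : Nonempty Y := ⟨p⟩
  have hrp : r + p ∈ E := hEadd r hrE p hpE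
  have hJcli : IsCLI E ((· + (r + p)) '' E) := by
    refine ⟨⟨p + (r + p), ⟨p, hpE, rfl⟩⟩,
      ((hEcl.isCompact.image (hc (r + p))).isClosed), ?_, ?_⟩
    · rintro _ ⟨v, hv, rfl⟩; exact hEadd v hv _ hrp
    · rintro u hu _ ⟨v, hv, rfl⟩
      exact ⟨u + v, hEadd u hu v hv, add_assoc u v (r + p)⟩
  obtain ⟨L'', hL''J, hL''cli, _⟩ := exists_min_cli E _ hJcli
  obtain ⟨e, heL'', hee⟩ := cli_idem hc hL''cli
  obtain ⟨v₀, hv₀E, hv₀'⟩ := hL''J heL''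
  have hv₀ : v₀ + (r + p) = e := hv₀'
  have heL₀ : e ∈ L₀ := by
    have h1 : (v₀ + r) + p ∈ L₀ := hL₀.2.2.2 (v₀ + r) trivial p hpL
    rwa [add_assoc, hv₀] at h1
  have hrange : Set.range (· + e) ⊆ L₀ := by
    rintro _ ⟨u, rfl⟩; exact hL₀.2.2.2 u trivial e heL₀
  have hLeq := hmin₀ _ (isCLI_range_add hc e) hrange
  have hpmem : p ∈ Set.range (· + e) := by rw [hLeq]; exact hpL
  obtain ⟨u₀, hu₀⟩ := hpmem
  have hpe : p + e = p := by
    rw [← hu₀, add_assoc, hee]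
  have hpJ : p ∈ (· + (r + p)) '' E := by
    have h2 : p + e ∈ L'' := hL''cli.2.2.2 p hpE e heL''
    rw [hpe] at h2
    exact hL''J h2
  exact hpJ

end Abstract
section UltraLemmas

variable {X : Type*}

theorem mem_addU [Add X] {U V : Ultrafilter X} {s : Set X} :
    s ∈ U + V ↔ {a | {b | a + b ∈ s} ∈ V} ∈ U := by
  have h := Ultrafilter.eventually_add U V (· ∈ s)
  simpa only [Filter.Eventually, Ultrafilter.mem_coe, Set.setOf_mem_eq] using h

theorem pure_addU [Add X] (g : X) (q : Ultrafilter X) (s : Set X) :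
    s ∈ (pure g : Ultrafilter X) + q ↔ {b | g + b ∈ s} ∈ q := by
  rw [mem_addU]
  simp

theorem map_addU {Z : Type*} [Add X] [Add Z] (f : X → Z)
    (hf : ∀ a b, f (a + b) = f a + f b) (U V : Ultrafilter X) :
    (U + V).map f = U.map f + V.map f := by
  apply Ultrafilter.coe_injective
  apply Filter.ext
  intro s
  show s ∈ (U + V).map f ↔ s ∈ U.map f + V.map f
  rw [Ultrafilter.mem_map, mem_addU, mem_addU]
  simp only [Ultrafilter.mem_map, Set.preimage_setOf_eq, Set.mem_setOf_eq, Set.mem_preimage, hf]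

theorem continuous_mapU {Z : Type*} (f : X → Z) : Continuous (Ultrafilter.map f) :=
  ultrafilterBasis_is_basis.continuous_iff.2 <| Set.forall_mem_range.mpr fun s =>
    ultrafilter_isOpen_basic (f ⁻¹' s)

end UltraLemmas

section Nadd

variable {S : Type*}

/-- `nadd n x a = a + n·x`. -/
def nadd [AddSemigroup S] : ℕ → S → S → S
  | 0, _, a => a
  | n + 1, x, a => nadd n x a + x

theorem nadd_shift [AddSemigroup S] (n : ℕ) (x a b : S) :
    a + nadd n x b = nadd n x (a + b) := by
  induction n with
  | zero => rfl
  | succ n ih => show a + (nadd n x b + x) = nadd n x (a + b) + x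
                 rw [← add_assoc, ih]

theorem nadd_out [AddCommSemigroup S] (n : ℕ) (x a b : S) :
    nadd n x (a + b) = nadd n x a + b := by
  induction n with
  | zero => rfl
  | succ n ih =>
    show nadd n x (a + b) + x = (nadd n x a + x) + b
    rw [ih, add_assoc, add_comm b x, ← add_assoc]

theorem nadd_hom [AddCommSemigroup S] (n m : ℕ) (x a b : S) :
    nadd (n + m) x (a + b) = nadd n x a + nadd m x b := by
  induction m with
  | zero => exact nadd_out n x a b
  | succ m ih =>
    show nadd (n + m) x (a + b) + x = nadd n x a + (nadd m x b + x)
    rw [ih, add_assoc]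

theorem pnsmul_eq_nadd [AddSemigroup S] (n : ℕ+) (x a : S) :
    a + pnsmul n x = nadd (n : ℕ) x a := by
  have key : ∀ k : ℕ, a + (Nat.rec (motive := fun _ => S) x (fun _ y => y + x) k) =
      nadd (k + 1) x a := by
    intro k
    induction k with
    | zero => rfl
    | succ k ih =>
      show a + (Nat.rec (motive := fun _ => S) x (fun _ y => y + x) k + x) = nadd (k + 1) x a + x
      rw [← add_assoc, ih]
  have h2 := key n.natPred
  rwa [PNat.natPred_add_one] at h2

end Nadd
theorem stmt6 {S : Type*} [AddCommSemigroup S] (F : Finset S) (hF : F.Nonempty)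
    (M : Set S) (hM : PiecewiseSyndetic M) :
    PiecewiseSyndetic {p : S × ℕ+ | ∀ x ∈ F, p.1 + pnsmul p.2 x ∈ M} := by
  classical
  obtain ⟨x₀, hx₀F⟩ := hF
  haveI : Nonempty S := ⟨x₀⟩
  obtain ⟨G, hGne, hGthick⟩ := hM
  set B : Set S := {s | ∃ g ∈ G, g + s ∈ M} with hB
  have hcS : ∀ r : Ultrafilter S, Continuous (· + r) := fun r =>
    Ultrafilter.continuous_add_left r
  -- Step 1 : an ultrafilter p₀ all of whose left translates contain B
  have hsets : ∀ E : Finset S, {z : S | ∀ e ∈ E, e + z ∈ B}.Nonempty := by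
    intro E
    rcases E.eq_empty_or_nonempty with rfl | hE
    · exact ⟨x₀, by simp⟩
    · exact hGthick E hE
  have hdir : Directed (· ≥ ·) fun E : Finset S =>
      (Filter.principal {z : S | ∀ e ∈ E, e + z ∈ B}) := by
    intro E₁ E₂
    refine ⟨E₁ ∪ E₂, Filter.principal_mono.2 ?_, Filter.principal_mono.2 ?_⟩ <;>
      · intro z hz e he
        exact hz e (by simp [he])
  haveI hnb : (⨅ E : Finset S, Filter.principal {z : S | ∀ e ∈ E, e + z ∈ B}).NeBot :=
    Filter.iInf_neBot_of_directed hdir fun E => Filter.principal_neBot_iff.mpr (hsets E)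
  obtain ⟨p₀, hp₀⟩ :=
    Ultrafilter.exists_le (⨅ E : Finset S, Filter.principal {z : S | ∀ e ∈ E, e + z ∈ B})
  have hp₀mem : ∀ t : S, {z : S | t + z ∈ B} ∈ p₀ := by
    intro t
    have h1 : {z : S | ∀ e ∈ ({t} : Finset S), e + z ∈ B} ∈
        (⨅ E : Finset S, Filter.principal {z : S | ∀ e ∈ E, e + z ∈ B}) :=
      Filter.mem_iInf_of_mem ({t} : Finset S) (Filter.mem_principal_self _)
    have h2 := hp₀ h1
    rw [Ultrafilter.mem_coe] at h2
    convert h2 using 1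
    ext z; simp
  have hBmem : ∀ q ∈ Set.range (· + p₀), B ∈ q := by
    rintro _ ⟨u, rfl⟩
    rw [mem_addU]
    have huniv : {a : S | {b | a + b ∈ B} ∈ p₀} = Set.univ :=
      Set.eq_univ_of_forall fun a => hp₀mem a
    rw [huniv]
    exact Filter.univ_mem
  obtain ⟨L, hLsub, hLcli, hLmin⟩ := exists_min_cli Set.univ _ (isCLI_range_add hcS p₀)
  obtain ⟨q₂, hq₂⟩ := hLcli.1
  have hBq₂ : B ∈ q₂ := hBmem q₂ (hLsub hq₂)
  have hBuni : B = ⋃ g ∈ (G : Set S), {s | g + s ∈ M} := by ext s; simp [hB]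
  rw [hBuni] at hBq₂
  obtain ⟨g₀, hg₀G, hg₀⟩ := (Ultrafilter.finite_biUnion_mem_iff G.finite_toSet).1 hBq₂
  have hq₃L : (pure g₀ : Ultrafilter S) + q₂ ∈ L := hLcli.2.2.2 (pure g₀) trivial q₂ hq₂
  have hMq₃ : M ∈ (pure g₀ : Ultrafilter S) + q₂ := (pure_addU g₀ q₂ M).2 hg₀
  obtain ⟨p, hpL, hpp⟩ := cli_idem hcS hLcli
  have hq₃p : ((pure g₀ : Ultrafilter S) + q₂) + p = (pure g₀ : Ultrafilter S) + q₂ :=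
    min_right_id hcS L hLcli hLmin hpL hpp hq₃L
  have hMq₃p : M ∈ ((pure g₀ : Ultrafilter S) + q₂) + p := by rw [hq₃p]; exact hMq₃
  rw [mem_addU] at hMq₃p
  obtain ⟨t₀, ht₀⟩ := Ultrafilter.nonempty_of_mem hMq₃p
  have hM₁p : {b | t₀ + b ∈ M} ∈ p := ht₀
  -- Step 2 : lifting to S × ℕ
  have hcT : ∀ r : Ultrafilter (S × ℕ), Continuous (· + r) := fun r =>
    Ultrafilter.continuous_add_left r
  let ι := {x : S // x ∈ F}
  let φ : ι → (S × ℕ) → S := fun i t => nadd t.2 i.1 t.1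
  have hφhom : ∀ (i : ι) (s t : S × ℕ), φ i (s + t) = φ i s + φ i t := by
    intro i s t
    exact nadd_hom s.2 t.2 i.1 s.1 t.1
  let θ : Ultrafilter (S × ℕ) → (ι → Ultrafilter S) := fun q i => q.map (φ i)
  have hθhom : ∀ u v, θ (u + v) = θ u + θ v := fun u v =>
    funext fun i => map_addU (φ i) (hφhom i) u v
  have hθcont : Continuous θ := continuous_pi fun i => continuous_mapU (φ i)
  have hcY : ∀ y : ι → Ultrafilter S, Continuous (· + y) := by
    intro y
    apply continuous_pi
    intro i
    exact (hcS (y i)).comp (continuous_apply i)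
  let pbar : ι → Ultrafilter S := fun _ => p
  let w₀ : Ultrafilter (S × ℕ) := p.map (fun a => (a, 0))
  have hθw₀ : θ w₀ = pbar := by
    funext i
    show (p.map fun a => (a, (0 : ℕ))).map (φ i) = p
    rw [Ultrafilter.map_map]
    have hcomp : (φ i ∘ fun a : S => (a, (0 : ℕ))) = id := rfl
    rw [hcomp, Ultrafilter.map_id]
  obtain ⟨L₂, hL₂sub, hL₂cli, hL₂min⟩ := exists_min_cli Set.univ _ (isCLI_range_add hcT w₀)
  obtain ⟨q₄, hq₄⟩ := hL₂cli.1
  obtain ⟨u, hu⟩ := hL₂sub hq₄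
  have hEcl : IsClosed (Set.range θ) := (isCompact_range hθcont).isClosed
  have hEadd : ∀ x ∈ Set.range θ, ∀ y ∈ Set.range θ, x + y ∈ Set.range θ := by
    rintro _ ⟨a, rfl⟩ _ ⟨b, rfl⟩
    exact ⟨a + b, hθhom a b⟩
  have hpbarE : pbar ∈ Set.range θ := ⟨w₀, hθw₀⟩
  have hpbaridem : pbar + pbar = pbar := funext fun i => hpp
  have hLbarcli : IsCLI Set.univ {f : ι → Ultrafilter S | ∀ i, f i ∈ L} := by
    refine ⟨⟨pbar, fun i => hpL⟩, ?_, Set.subset_univ _, ?_⟩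
    · have hLbar : {f : ι → Ultrafilter S | ∀ i, f i ∈ L} = ⋂ i, (fun f => f i) ⁻¹' L := by
        ext f; simp
      rw [hLbar]
      exact isClosed_iInter fun i => hLcli.2.1.preimage (continuous_apply i)
    · intro u' _ f hf i
      exact hLcli.2.2.2 (u' i) trivial (f i) (hf i)
  have hLbarmin : ∀ L', IsCLI Set.univ L' → L' ⊆ {f : ι → Ultrafilter S | ∀ i, f i ∈ L} →
      L' = {f : ι → Ultrafilter S | ∀ i, f i ∈ L} := by
    intro L' hL' hsub
    obtain ⟨f₀, hf₀⟩ := hL'.1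
    refine subset_antisymm hsub ?_
    intro h hh
    have hcoord : ∀ i, ∃ u', u' + f₀ i = h i := by
      intro i
      have hrange : Set.range (· + f₀ i) ⊆ L := by
        rintro _ ⟨u', rfl⟩
        exact hLcli.2.2.2 u' trivial _ (hsub hf₀ i)
      have heq := hLmin _ (isCLI_range_add hcS (f₀ i)) hrange
      have hmem : h i ∈ Set.range (· + f₀ i) := by rw [heq]; exact hh i
      exact hmem
    choose uu huu using hcoord
    have huuf : uu + f₀ = h := funext fun i => huu i
    rw [← huuf]
    exact hL'.2.2.2 uu trivial f₀ hf₀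
  obtain ⟨vhat, hvhatE, hvhat⟩ := F3 hcY hEcl hEadd hpbarE hpbaridem hLbarcli hLbarmin
    (fun i => hpL) ⟨u, rfl⟩
  obtain ⟨v, rfl⟩ := hvhatE
  have hqL₂ : v + q₄ ∈ L₂ := hL₂cli.2.2.2 v trivial q₄ hq₄
  have hθq : θ (v + q₄) = pbar := by
    have h1 : θ (v + q₄) = θ v + (θ u + θ w₀) := by
      rw [← hu, hθhom, hθhom]
    rw [h1, hθw₀]
    exact hvhat
  have hM₁mem : ∀ i : ι, (φ i) ⁻¹' {b | t₀ + b ∈ M} ∈ (v + q₄) := by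
    intro i
    have h1 : (v + q₄).map (φ i) = p := congrFun hθq i
    have h2 : {b | t₀ + b ∈ M} ∈ (v + q₄).map (φ i) := by rw [h1]; exact hM₁p
    exact Ultrafilter.mem_map.1 h2
  set A₂ : Set (S × ℕ) := ⋂ i : ι, (φ i) ⁻¹' {b | t₀ + b ∈ M} with hA₂def
  have hA₂mem : A₂ ∈ v + q₄ := by
    rw [← Ultrafilter.mem_coe, hA₂def, Filter.iInter_mem]
    exact fun i => hM₁mem i
  have hPq : ∀ r : Ultrafilter (S × ℕ), ∃ u' : Ultrafilter (S × ℕ),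
      u' + (r + (v + q₄)) = v + q₄ :=
    fun r => min_strong hcT L₂ hL₂cli hL₂min hqL₂ r
  -- Step 3 : syndeticity
  have hsynd : ∃ G₂ : Finset (S × ℕ), ∀ t : S × ℕ, ∃ g ∈ G₂,
      {z | (g + t) + z ∈ A₂} ∈ (v + q₄) := by
    by_contra hcon
    push_neg at hcon
    have hsets₂ : ∀ G₂ : Finset (S × ℕ),
        {t : S × ℕ | ∀ g ∈ G₂, {z | (g + t) + z ∈ A₂} ∉ (v + q₄)}.Nonempty := by
      intro G₂
      obtain ⟨t, ht⟩ := hcon G₂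
      exact ⟨t, ht⟩
    have hdir₂ : Directed (· ≥ ·) fun G₂ : Finset (S × ℕ) =>
        (Filter.principal {t : S × ℕ | ∀ g ∈ G₂, {z | (g + t) + z ∈ A₂} ∉ (v + q₄)}) := by
      intro E₁ E₂
      refine ⟨E₁ ∪ E₂, Filter.principal_mono.2 ?_, Filter.principal_mono.2 ?_⟩ <;>
        · intro t ht g hg
          exact ht g (by simp [hg])
    haveI : (⨅ G₂ : Finset (S × ℕ), Filter.principal
        {t : S × ℕ | ∀ g ∈ G₂, {z | (g + t) + z ∈ A₂} ∉ (v + q₄)}).NeBot :=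
      Filter.iInf_neBot_of_directed hdir₂ fun G₂ => Filter.principal_neBot_iff.mpr (hsets₂ G₂)
    obtain ⟨r, hr⟩ := Ultrafilter.exists_le (⨅ G₂ : Finset (S × ℕ), Filter.principal
        {t : S × ℕ | ∀ g ∈ G₂, {z | (g + t) + z ∈ A₂} ∉ (v + q₄)})
    obtain ⟨u', hu'⟩ := hPq r
    have hA₂' : A₂ ∈ u' + (r + (v + q₄)) := by rw [hu']; exact hA₂mem
    rw [mem_addU] at hA₂'
    obtain ⟨t, ht⟩ := Ultrafilter.nonempty_of_mem hA₂'
    have ht' : {b | t + b ∈ A₂} ∈ r + (v + q₄) := ht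
    rw [mem_addU] at ht'
    have hmem2 : {c : S × ℕ | ∀ g ∈ ({t} : Finset (S × ℕ)),
        {z | (g + c) + z ∈ A₂} ∉ (v + q₄)} ∈ r := by
      have hmm := Filter.mem_iInf_of_mem (f := fun G₂ : Finset (S × ℕ) => Filter.principal
        {t' : S × ℕ | ∀ g ∈ G₂, {z | (g + t') + z ∈ A₂} ∉ (v + q₄)}) ({t} : Finset (S × ℕ))
        (Filter.mem_principal_self _)
      have := hr hmm
      rwa [Ultrafilter.mem_coe] at this
    rw [← Ultrafilter.mem_coe] at ht' hmem2
    obtain ⟨c, hc1, hc2⟩ := Ultrafilter.nonempty_of_mem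
      ((Ultrafilter.mem_coe).1 (Filter.inter_mem ht' hmem2))
    have hc2' := hc2 t (Finset.mem_singleton_self t)
    apply hc2'
    have hsetseq : {z | (t + c) + z ∈ A₂} = {d | t + (c + d) ∈ A₂} := by
      ext d; rw [Set.mem_setOf_eq, Set.mem_setOf_eq, add_assoc]
    rw [hsetseq]
    exact hc1
  obtain ⟨G₂, hG₂⟩ := hsynd
  -- Step 4 : conclusion
  refine ⟨G₂.image (fun g => (t₀ + g.1, g.2.succPNat)), ?_, ?_⟩
  · obtain ⟨g, hg, -⟩ := hG₂ (x₀, 0)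
    exact ⟨_, Finset.mem_image_of_mem _ hg⟩
  · intro E hEne
    have hchoice : ∀ e : S × ℕ+, ∃ g ∈ G₂,
        {z | (g + (e.1 + x₀, (e.2 : ℕ) + 2)) + z ∈ A₂} ∈ (v + q₄) := fun e => hG₂ _
    choose gg hggG hggq using hchoice
    have hD : (⋂ e ∈ (E : Set (S × ℕ+)), {z | (gg e + (e.1 + x₀, (e.2 : ℕ) + 2)) + z ∈ A₂})
        ∈ v + q₄ := by
      rw [← Ultrafilter.mem_coe]
      exact (Filter.biInter_mem E.finite_toSet).2 fun e he => hggq e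
    obtain ⟨z₀, hz₀⟩ := Ultrafilter.nonempty_of_mem hD
    refine ⟨(x₀ + z₀.1, z₀.2.succPNat), ?_⟩
    intro e heE
    have hz : (gg e + (e.1 + x₀, (e.2 : ℕ) + 2)) + z₀ ∈ A₂ :=
      Set.mem_iInter₂.1 hz₀ e heE
    refine ⟨(t₀ + (gg e).1, (gg e).2.succPNat), Finset.mem_image_of_mem _ (hggG e), ?_⟩
    intro x hx
    have hx2 := Set.mem_iInter.1 hz ⟨x, hx⟩
    have hx2' : t₀ + nadd (((gg e).2 + ((e.2 : ℕ) + 2)) + z₀.2) x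
        (((gg e).1 + (e.1 + x₀)) + z₀.1) ∈ M := hx2
    show ((t₀ + (gg e).1, (gg e).2.succPNat) + (e + (x₀ + z₀.1, z₀.2.succPNat))).1 +
      pnsmul ((t₀ + (gg e).1, (gg e).2.succPNat) + (e + (x₀ + z₀.1, z₀.2.succPNat))).2 x ∈ M
    rw [pnsmul_eq_nadd]
    have hcoe : ((((t₀ + (gg e).1, (gg e).2.succPNat) +
        (e + (x₀ + z₀.1, z₀.2.succPNat))).2 : ℕ+) : ℕ) =
        ((gg e).2 + ((e.2 : ℕ) + 2)) + z₀.2 := by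
      show (((gg e).2.succPNat + (e.2 + z₀.2.succPNat) : ℕ+) : ℕ) = _
      simp only [PNat.add_coe, Nat.succPNat_coe]
      omega
    have hfst : ((t₀ + (gg e).1, (gg e).2.succPNat) +
        (e + (x₀ + z₀.1, z₀.2.succPNat))).1 =
        t₀ + ((((gg e).1 + (e.1 + x₀)) + z₀.1)) := by
      show (t₀ + (gg e).1) + (e.1 + (x₀ + z₀.1)) = _
      simp only [add_assoc]
    rw [hcoe, hfst, ← nadd_shift]
    exact hx2'
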